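/- Let n = 3 and p = 3, and let Ξ be Chatterjee's rank correlation matrix built from 3 independent uniform random permutations of {1,2,3}. Define Y_{ij} = Ξ(i,j)² + Ξ(j,i)². Then E[ Y_{12} · Y_{13} · Y_{23} ] = 5/16384, whereas E[Y_{12}] · E[Y_{13}] · E[Y_{23}] = 1/4096; in particular the random variables Y_{12}, Y_{13}, Y_{23} are not mutually independent. -/

import Mathlib

open MeasureTheory ProbabilityTheory Filter Topology Matrix

noncomputable section

instance permMeasurableSpace (n : ℕ) : MeasurableSpace (Equiv.Perm (Fin n)) := ⊤

/-- The uniform distribution on the permutations of `{1,…,n}`. -/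
def uniformPermMeasure (n : ℕ) : Measure (Equiv.Perm (Fin n)) :=
  haveI : Nonempty (Equiv.Perm (Fin n)) := ⟨1⟩
  (PMF.uniformOfFintype (Equiv.Perm (Fin n))).toMeasure

/-- Chatterjee's functional `f_ξ(σ) = 1 - 3/(n²-1) ∑_{k=1}^{n-1} |σ(k+1) - σ(k)|`. -/
def fxi {n : ℕ} (σ : Equiv.Perm (Fin n)) : ℝ :=
  1 - 3 / ((n : ℝ) ^ 2 - 1) *
    ∑ k ∈ (Finset.range (n - 1)).attach,
      |(((σ ⟨k.1 + 1, by have := Finset.mem_range.mp k.2; omega⟩ : Fin n) : ℕ) : ℝ) -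
        (((σ ⟨k.1, by have := Finset.mem_range.mp k.2; omega⟩ : Fin n) : ℕ) : ℝ)|

/-- Chatterjee's rank correlation matrix built from `p` permutations of `{1,…,n}`. -/
def chMatrix {n p : ℕ} (σ : Fin p → Equiv.Perm (Fin n)) : Matrix (Fin p) (Fin p) ℝ :=
  Matrix.of fun i j => if i = j then 1 else fxi (σ j * (σ i)⁻¹)

/-- The symmetrization `Φ = (Ξ + Ξᵀ)/2`. -/
def chPhi {n p : ℕ} (σ : Fin p → Equiv.Perm (Fin n)) : Matrix (Fin p) (Fin p) ℝ :=
  (1 / 2 : ℝ) • (chMatrix σ + (chMatrix σ)ᵀ)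

/-- The Gram-type symmetrization `Ψ = (Ξ - I)(Ξ - I)ᵀ`. -/
def chPsi {n p : ℕ} (σ : Fin p → Equiv.Perm (Fin n)) : Matrix (Fin p) (Fin p) ℝ :=
  (chMatrix σ - 1) * (chMatrix σ - 1)ᵀ

theorem chPhi_isHermitian {n p : ℕ} (σ : Fin p → Equiv.Perm (Fin n)) :
    (chPhi σ).IsHermitian := by
  show (chPhi σ)ᴴ = chPhi σ
  ext i j
  simp [chPhi, Matrix.conjTranspose_apply, Matrix.transpose_apply, Matrix.add_apply,
    Matrix.smul_apply]
  ring

theorem chPsi_isHermitian {n p : ℕ} (σ : Fin p → Equiv.Perm (Fin n)) :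
    (chPsi σ).IsHermitian := by
  have h : (chMatrix σ - 1)ᵀ = (chMatrix σ - 1)ᴴ := by
    ext i j
    simp [Matrix.conjTranspose_apply]
  rw [chPsi, h]
  exact Matrix.isHermitian_mul_conjTranspose_self _

/-- Empirical spectral distribution of a Hermitian real matrix. -/
def ESD {p : ℕ} {A : Matrix (Fin p) (Fin p) ℝ} (hA : A.IsHermitian) : Measure ℝ :=
  (p : ENNReal)⁻¹ • ∑ i : Fin p, Measure.dirac (hA.eigenvalues i)

/-- The semicircle law with center `u` and radius `r`. -/
def semicircleLaw (u r : ℝ) : Measure ℝ :=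
  volume.withDensity fun x =>
    ENNReal.ofReal
      ((Set.Icc (u - r) (u + r)).indicator
        (fun y => 2 / (Real.pi * r ^ 2) * Real.sqrt (r ^ 2 - (y - u) ^ 2)) x)

/-- The Marchenko–Pastur law `MP(1,σ²)`. -/
def mpLawOne (s2 : ℝ) : Measure ℝ :=
  volume.withDensity fun x =>
    ENNReal.ofReal
      ((Set.Icc 0 (4 * s2)).indicator
        (fun y => Real.sqrt ((4 * s2 - y) * y) / (2 * Real.pi * y * s2)) x)



def fxiZ (σ : Equiv.Perm (Fin 3)) : ℤ :=
  8 - 3 * ((((σ 1 : Fin 3) : ℤ) - ((σ 0 : Fin 3) : ℤ)).natAbs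
    + (((σ 2 : Fin 3) : ℤ) - ((σ 1 : Fin 3) : ℤ)).natAbs : ℕ)

lemma fxi_eq (σ : Equiv.Perm (Fin 3)) : fxi σ = (fxiZ σ : ℝ) / 8 := by
  have h : (Finset.range (3-1)).attach
      = {(⟨0, by decide⟩ : {x // x ∈ Finset.range (3-1)}), ⟨1, by decide⟩} := by decide
  rw [fxi, h, Finset.sum_insert (by decide), Finset.sum_singleton, fxiZ]
  push_cast [Nat.cast_natAbs]
  norm_num
  ring

def p3 : List (Equiv.Perm (Fin 3)) :=
  [1, Equiv.swap 0 1, Equiv.swap 0 2, Equiv.swap 1 2,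
    Equiv.swap 0 1 * Equiv.swap 1 2, Equiv.swap 1 2 * Equiv.swap 0 1]

lemma perm3_ext (σ τ : Equiv.Perm (Fin 3)) (h0 : σ 0 = τ 0) (h1 : σ 1 = τ 1) : σ = τ := by
  have key : ∀ a b c d : Fin 3, a ≠ b → c ≠ a → c ≠ b → d ≠ a → d ≠ b → c = d := by decide
  have hne : σ 0 ≠ σ 1 := fun h => by simpa using σ.injective h
  refine Equiv.ext fun x => ?_
  have h3 : ∀ x : Fin 3, x = 0 ∨ x = 1 ∨ x = 2 := by decide
  rcases h3 x with rfl | rfl | rfl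
  · exact h0
  · exact h1
  · refine key (σ 0) (σ 1) (σ 2) (τ 2) hne ?_ ?_ ?_ ?_
    · exact fun h => by simpa using σ.injective h
    · exact fun h => by simpa using σ.injective h
    · rw [h0]; exact fun h => by simpa using τ.injective h
    · rw [h1]; exact fun h => by simpa using τ.injective h

lemma perm3_mem (σ : Equiv.Perm (Fin 3)) : σ ∈ p3 := by
  have h3 : ∀ x : Fin 3, x = 0 ∨ x = 1 ∨ x = 2 := by decide
  have hne : σ 0 ≠ σ 1 := fun h => by simpa using σ.injective h
  simp only [p3, List.mem_cons, List.not_mem_nil, or_false]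
  rcases h3 (σ 0) with h0 | h0 | h0 <;> rcases h3 (σ 1) with h1 | h1 | h1
  · exact absurd (h0.trans h1.symm) hne
  · exact Or.inl (perm3_ext σ 1 (by rw [h0]; decide) (by rw [h1]; decide)).symm.symm
  · exact Or.inr <| Or.inr <| Or.inr <| Or.inl
      (perm3_ext σ _ (by rw [h0]; decide) (by rw [h1]; decide))
  · exact Or.inr <| Or.inl (perm3_ext σ _ (by rw [h0]; decide) (by rw [h1]; decide))
  · exact absurd (h0.trans h1.symm) hne
  · exact Or.inr <| Or.inr <| Or.inr <| Or.inr <| Or.inl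
      (perm3_ext σ _ (by rw [h0]; decide) (by rw [h1]; decide))
  · exact Or.inr <| Or.inr <| Or.inr <| Or.inr <| Or.inr
      (perm3_ext σ _ (by rw [h0]; decide) (by rw [h1]; decide))
  · exact Or.inr <| Or.inr <| Or.inl (perm3_ext σ _ (by rw [h0]; decide) (by rw [h1]; decide))
  · exact absurd (h0.trans h1.symm) hne

lemma p3_nodup : p3.Nodup := by decide

lemma fxiZ_cases (τ : Equiv.Perm (Fin 3)) : fxiZ τ = 2 ∨ fxiZ τ = -1 := by
  have := perm3_mem τ
  simp only [p3, List.mem_cons, List.not_mem_nil, or_false] at this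
  rcases this with rfl | rfl | rfl | rfl | rfl | rfl <;> decide

def YZ (x : Fin 3 → Equiv.Perm (Fin 3)) (i j : Fin 3) : ℤ :=
  fxiZ (x j * (x i)⁻¹) ^ 2 + fxiZ (x i * (x j)⁻¹) ^ 2

def WZ (x : Fin 3 → Equiv.Perm (Fin 3)) : ℤ := YZ x 0 1 * YZ x 0 2 * YZ x 1 2

lemma YZ_cases (x : Fin 3 → Equiv.Perm (Fin 3)) (i j : Fin 3) :
    YZ x i j = 8 ∨ YZ x i j = 5 ∨ YZ x i j = 2 := by
  rcases fxiZ_cases (x j * (x i)⁻¹) with h1 | h1 <;>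
    rcases fxiZ_cases (x i * (x j)⁻¹) with h2 | h2 <;> simp [YZ, h1, h2]

lemma univ_perm3 : (Finset.univ : Finset (Equiv.Perm (Fin 3))) = p3.toFinset :=
  (Finset.eq_univ_iff_forall.mpr fun σ => List.mem_toFinset.mpr (perm3_mem σ)).symm

def tripleEquiv : (Equiv.Perm (Fin 3) × Equiv.Perm (Fin 3) × Equiv.Perm (Fin 3))
    ≃ (Fin 3 → Equiv.Perm (Fin 3)) where
  toFun := fun p => ![p.1, p.2.1, p.2.2]
  invFun := fun x => (x 0, x 1, x 2)
  left_inv := fun p => rfl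
  right_inv := fun x => by funext i; fin_cases i <;> rfl

lemma sum_triple {M' : Type*} [AddCommMonoid M'] (f : (Fin 3 → Equiv.Perm (Fin 3)) → M') :
    (∑ x : Fin 3 → Equiv.Perm (Fin 3), f x)
      = ∑ a : Equiv.Perm (Fin 3), ∑ b : Equiv.Perm (Fin 3), ∑ c : Equiv.Perm (Fin 3),
          f ![a, b, c] := by
  rw [← tripleEquiv.sum_comp f]
  simp only [Fintype.sum_prod_type]
  rfl

lemma sum_perm_eq {M' : Type*} [AddCommMonoid M'] (f : Equiv.Perm (Fin 3) → M') :
    (∑ a : Equiv.Perm (Fin 3), f a) = (p3.map f).sum := by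
  rw [univ_perm3, List.sum_toFinset _ p3_nodup]

set_option maxRecDepth 1000000 in
set_option maxHeartbeats 4000000 in
lemma sumWZ : (∑ x : Fin 3 → Equiv.Perm (Fin 3), WZ x) = 17280 := by
  rw [sum_triple]
  simp only [sum_perm_eq]
  decide

set_option maxRecDepth 1000000 in
set_option maxHeartbeats 4000000 in
lemma sumYZ01 : (∑ x : Fin 3 → Equiv.Perm (Fin 3), YZ x 0 1) = 864 := by
  rw [sum_triple]
  simp only [sum_perm_eq]
  decide

set_option maxRecDepth 1000000 in
set_option maxHeartbeats 4000000 in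
lemma sumYZ02 : (∑ x : Fin 3 → Equiv.Perm (Fin 3), YZ x 0 2) = 864 := by
  rw [sum_triple]
  simp only [sum_perm_eq]
  decide

set_option maxRecDepth 1000000 in
set_option maxHeartbeats 4000000 in
lemma sumYZ12 : (∑ x : Fin 3 → Equiv.Perm (Fin 3), YZ x 1 2) = 864 := by
  rw [sum_triple]
  simp only [sum_perm_eq]
  decide

instance permMeasurableSingleton (n : ℕ) :
    MeasurableSingletonClass (Equiv.Perm (Fin n)) :=
  ⟨fun _ => MeasurableSpace.measurableSet_top⟩

/-- `Y_{ij} = Ξ(i,j)² + Ξ(j,i)²` for the Chatterjee matrix built from `σ`. -/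
def Ypair {Ω : Type*} (σ : Fin 3 → Ω → Equiv.Perm (Fin 3)) (i j : Fin 3) : Ω → ℝ :=
  fun ω => (chMatrix (fun u => σ u ω) i j) ^ 2 + (chMatrix (fun u => σ u ω) j i) ^ 2

section Main

variable {Ω : Type*} [MeasurableSpace Ω] (μ : Measure Ω) [IsProbabilityMeasure μ]
  (σ : Fin 3 → Ω → Equiv.Perm (Fin 3))

lemma Ypair_eq (i j : Fin 3) (hij : i ≠ j) (ω : Ω) :
    Ypair σ i j ω = (YZ (fun u => σ u ω) i j : ℝ) / 64 := by
  rw [Ypair, chMatrix, YZ]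
  simp only [Matrix.of_apply, if_neg hij, if_neg hij.symm]
  rw [fxi_eq, fxi_eq]
  push_cast
  ring

lemma map_T_singleton (hmeas : ∀ i, Measurable (σ i))
    (hunif : ∀ i, μ.map (σ i) = uniformPermMeasure 3)
    (hindep : iIndepFun (m := fun _ => permMeasurableSpace 3) σ μ)
    (x : Fin 3 → Equiv.Perm (Fin 3)) :
    μ.map (fun ω i => σ i ω) {x} = (216 : ENNReal)⁻¹ := by
  have hT : Measurable (fun ω (i : Fin 3) => σ i ω) := measurable_pi_lambda _ hmeas
  rw [Measure.map_apply hT (measurableSet_singleton x)]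
  have hpre : (fun ω (i : Fin 3) => σ i ω) ⁻¹' {x} = ⋂ i, σ i ⁻¹' {x i} := by
    ext ω
    simp [Set.mem_iInter, funext_iff]
  rw [hpre, hindep.meas_iInter fun i => ⟨{x i}, MeasurableSpace.measurableSet_top, rfl⟩]
  have hone : ∀ i, μ (σ i ⁻¹' {x i}) = (6 : ENNReal)⁻¹ := by
    intro i
    rw [← Measure.map_apply (hmeas i) (measurableSet_singleton (x i)), hunif i,
      uniformPermMeasure, PMF.toMeasure_apply_singleton _ _ (measurableSet_singleton _),
      PMF.uniformOfFintype_apply]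
    norm_num [Fintype.card_perm, Fintype.card_fin, Nat.factorial]
  simp only [hone]
  rw [Finset.prod_const, Finset.card_univ, Fintype.card_fin, ← ENNReal.inv_pow]
  norm_num

lemma integral_int (hmeas : ∀ i, Measurable (σ i))
    (hunif : ∀ i, μ.map (σ i) = uniformPermMeasure 3)
    (hindep : iIndepFun (m := fun _ => permMeasurableSpace 3) σ μ)
    (f : (Fin 3 → Equiv.Perm (Fin 3)) → ℤ) :
    ∫ ω, ((f (fun i => σ i ω) : ℝ)) ∂μ
      = ((∑ x : Fin 3 → Equiv.Perm (Fin 3), f x : ℤ) : ℝ) / 216 := by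
  have hT : Measurable (fun ω (i : Fin 3) => σ i ω) := measurable_pi_lambda _ hmeas
  have hfm : Measurable fun x : Fin 3 → Equiv.Perm (Fin 3) => (f x : ℝ) :=
    measurable_of_countable _
  rw [show (∫ ω, ((f (fun i => σ i ω) : ℝ)) ∂μ)
      = ∫ x, (f x : ℝ) ∂(μ.map (fun ω i => σ i ω)) from
    (integral_map hT.aemeasurable hfm.aestronglyMeasurable).symm]
  haveI : IsProbabilityMeasure (μ.map (fun ω (i : Fin 3) => σ i ω)) :=
    Measure.isProbabilityMeasure_map hT.aemeasurable
  rw [integral_fintype (Integrable.of_finite)]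
  simp only [measureReal_def]
  have hterm : ∀ x ∈ (Finset.univ : Finset (Fin 3 → Equiv.Perm (Fin 3))),
      ((μ.map (fun ω i => σ i ω)) {x}).toReal • ((f x : ℤ) : ℝ) = (f x : ℝ) / 216 := by
    intro x _
    rw [map_T_singleton μ σ hmeas hunif hindep x]
    rw [smul_eq_mul, ENNReal.toReal_inv]
    norm_num
    ring
  rw [Finset.sum_congr rfl hterm, ← Finset.sum_div]
  push_cast
  ring

end Main

/-- **A counterexample to mutual independence for `n = 3`.**
For the Chatterjee matrix `Ξ` built from `3` independent uniform random permutations of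
`{1,2,3}`, with `Y_{ij} = Ξ(i,j)² + Ξ(j,i)²`, we have `E[Y₁₂ Y₁₃ Y₂₃] = 5/16384`, while
`E[Y₁₂]·E[Y₁₃]·E[Y₂₃] = 1/4096`; in particular `Y₁₂, Y₁₃, Y₂₃` are not mutually independent. -/
theorem chatterjee_n3_not_independent
    {Ω : Type*} [MeasurableSpace Ω] (μ : Measure Ω) [IsProbabilityMeasure μ]
    (σ : Fin 3 → Ω → Equiv.Perm (Fin 3))
    (hmeas : ∀ i, Measurable (σ i))
    (hunif : ∀ i, μ.map (σ i) = uniformPermMeasure 3)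
    (hindep : iIndepFun (m := fun _ => permMeasurableSpace 3) σ μ) :
    (∫ ω, Ypair σ 0 1 ω * Ypair σ 0 2 ω * Ypair σ 1 2 ω ∂μ) = 5 / 16384 ∧
      (∫ ω, Ypair σ 0 1 ω ∂μ) * (∫ ω, Ypair σ 0 2 ω ∂μ) * (∫ ω, Ypair σ 1 2 ω ∂μ)
          = 1 / 4096 ∧
      ¬ iIndepFun (m := fun _ : Fin 3 => (inferInstance : MeasurableSpace ℝ))
          ![Ypair σ 0 1, Ypair σ 0 2, Ypair σ 1 2] μ := by
  have hT : Measurable (fun ω (i : Fin 3) => σ i ω) := measurable_pi_lambda _ hmeas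
  have h01 := Ypair_eq σ 0 1 (by decide)
  have h02 := Ypair_eq σ 0 2 (by decide)
  have h12 := Ypair_eq σ 1 2 (by decide)
  have E3 : (∫ ω, Ypair σ 0 1 ω * Ypair σ 0 2 ω * Ypair σ 1 2 ω ∂μ) = 5 / 16384 := by
    have hf : (fun ω => Ypair σ 0 1 ω * Ypair σ 0 2 ω * Ypair σ 1 2 ω)
        = fun ω => ((WZ (fun i => σ i ω) : ℤ) : ℝ) / 262144 := by
      funext ω
      rw [h01, h02, h12, WZ]
      push_cast
      ring
    rw [hf, integral_div, integral_int μ σ hmeas hunif hindep WZ, sumWZ]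
    norm_num
  have E01 : (∫ ω, Ypair σ 0 1 ω ∂μ) = 1 / 16 := by
    have hf : (fun ω => Ypair σ 0 1 ω)
        = fun ω => ((YZ (fun i => σ i ω) 0 1 : ℤ) : ℝ) / 64 := funext fun ω => h01 ω
    have hs : ∫ a, ((YZ (fun i => σ i a) 0 1 : ℤ) : ℝ) ∂μ
        = ((∑ x : Fin 3 → Equiv.Perm (Fin 3), YZ x 0 1 : ℤ) : ℝ) / 216 :=
      integral_int μ σ hmeas hunif hindep (fun x => YZ x 0 1)
    rw [hf, integral_div, hs, sumYZ01]
    norm_num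
  have E02 : (∫ ω, Ypair σ 0 2 ω ∂μ) = 1 / 16 := by
    have hf : (fun ω => Ypair σ 0 2 ω)
        = fun ω => ((YZ (fun i => σ i ω) 0 2 : ℤ) : ℝ) / 64 := funext fun ω => h02 ω
    have hs : ∫ a, ((YZ (fun i => σ i a) 0 2 : ℤ) : ℝ) ∂μ
        = ((∑ x : Fin 3 → Equiv.Perm (Fin 3), YZ x 0 2 : ℤ) : ℝ) / 216 :=
      integral_int μ σ hmeas hunif hindep (fun x => YZ x 0 2)
    rw [hf, integral_div, hs, sumYZ02]
    norm_num
  have E12 : (∫ ω, Ypair σ 1 2 ω ∂μ) = 1 / 16 := by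
    have hf : (fun ω => Ypair σ 1 2 ω)
        = fun ω => ((YZ (fun i => σ i ω) 1 2 : ℤ) : ℝ) / 64 := funext fun ω => h12 ω
    have hs : ∫ a, ((YZ (fun i => σ i a) 1 2 : ℤ) : ℝ) ∂μ
        = ((∑ x : Fin 3 → Equiv.Perm (Fin 3), YZ x 1 2 : ℤ) : ℝ) / 216 :=
      integral_int μ σ hmeas hunif hindep (fun x => YZ x 1 2)
    rw [hf, integral_div, hs, sumYZ12]
    norm_num
  have hYm : ∀ i j, i ≠ j → Measurable (Ypair σ i j) := by
    intro i j hij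
    have hf : Ypair σ i j = fun ω => ((YZ (fun u => σ u ω) i j : ℤ) : ℝ) / 64 :=
      funext (Ypair_eq σ i j hij)
    rw [hf]
    exact ((measurable_of_countable fun x => ((YZ x i j : ℤ) : ℝ)).comp hT).div_const 64
  have hbound : ∀ i j, i ≠ j → ∀ ω, ‖Ypair σ i j ω‖ ≤ 2 := by
    intro i j hij ω
    rw [Ypair_eq σ i j hij, Real.norm_eq_abs]
    rcases YZ_cases (fun u => σ u ω) i j with h | h | h <;> rw [h] <;> norm_num [abs_le]
  have hYint : ∀ i j, i ≠ j → Integrable (Ypair σ i j) μ := fun i j hij =>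
    (integrable_const (2 : ℝ)).mono' ((hYm i j hij).aestronglyMeasurable)
      (Filter.Eventually.of_forall (hbound i j hij))
  refine ⟨E3, by rw [E01, E02, E12]; norm_num, ?_⟩
  intro hind
  have hallm : ∀ i, Measurable (![Ypair σ 0 1, Ypair σ 0 2, Ypair σ 1 2] i) := by
    intro i
    fin_cases i
    · exact hYm 0 1 (by decide)
    · exact hYm 0 2 (by decide)
    · exact hYm 1 2 (by decide)
  have hmul := hind.indepFun_mul_left hallm 0 1 2 (by decide) (by decide)
  have hpair := hind.indepFun (show (0 : Fin 3) ≠ 1 by decide)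
  have e0 : ![Ypair σ 0 1, Ypair σ 0 2, Ypair σ 1 2] 0 = Ypair σ 0 1 := rfl
  have e1 : ![Ypair σ 0 1, Ypair σ 0 2, Ypair σ 1 2] 1 = Ypair σ 0 2 := rfl
  have e2 : ![Ypair σ 0 1, Ypair σ 0 2, Ypair σ 1 2] 2 = Ypair σ 1 2 := rfl
  rw [e0, e1, e2] at hmul
  rw [e0, e1] at hpair
  have hint12 : Integrable (Ypair σ 0 1 * Ypair σ 0 2) μ := by
    refine (integrable_const (4 : ℝ)).mono'
      (((hYm 0 1 (by decide)).mul (hYm 0 2 (by decide))).aestronglyMeasurable)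
      (Filter.Eventually.of_forall fun ω => ?_)
    have b1 := hbound 0 1 (by decide) ω
    have b2 := hbound 0 2 (by decide) ω
    have hn1 : (0:ℝ) ≤ ‖Ypair σ 0 1 ω‖ := norm_nonneg _
    have hn2 : (0:ℝ) ≤ ‖Ypair σ 0 2 ω‖ := norm_nonneg _
    calc ‖(Ypair σ 0 1 * Ypair σ 0 2) ω‖
        = ‖Ypair σ 0 1 ω‖ * ‖Ypair σ 0 2 ω‖ := norm_mul _ _
      _ ≤ 4 := by nlinarith
  have step1 := hmul.integral_mul_eq_mul_integral hint12.aestronglyMeasurable (hYint 1 2 (by decide)).aestronglyMeasurable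
  have step2 := hpair.integral_mul_eq_mul_integral (hYint 0 1 (by decide)).aestronglyMeasurable (hYint 0 2 (by decide)).aestronglyMeasurable
  have key : (∫ ω, Ypair σ 0 1 ω * Ypair σ 0 2 ω * Ypair σ 1 2 ω ∂μ)
      = ∫ ω, ((Ypair σ 0 1 * Ypair σ 0 2) * Ypair σ 1 2) ω ∂μ := rfl
  rw [E3, step1, step2, E01, E02, E12] at key
  norm_num at key


end
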